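/- (Lemma 1) Let x, v, g ∈ ℝ^{Np} and define the DSA primal-dual update x⁺ = x − α g − (I − Z̃)x − U v and v⁺ = v + U x⁺, where U = (Z̃ − Z)^{1/2}. Suppose x* ∈ ℝ^{Np} satisfies (I + Z − 2Z̃) x* = 0 and v* satisfies α ∇f(x*) + U v* = 0. Then α [g − ∇f(x*)] = (I + Z − 2Z̃)(x* − x⁺) + Z̃ (x − x⁺) − U (v⁺ − v*). -/

import Mathlib

open Finset

/-- The action of an `Np × Np` matrix on a vector of `ℝ^{Np}`. -/
noncomputable def mAct {d : ℕ} (Z : Matrix (Fin d) (Fin d) ℝ) (x : EuclideanSpace ℝ (Fin d)) :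
    EuclideanSpace ℝ (Fin d) := WithLp.toLp 2 (Z.mulVec x)

lemma mAct_sub {d : ℕ} (A : Matrix (Fin d) (Fin d) ℝ) (a b : EuclideanSpace ℝ (Fin d)) :
    mAct A (a - b) = mAct A a - mAct A b := by
  ext i; simp [mAct, Matrix.mulVec_sub]

lemma mAct_add {d : ℕ} (A : Matrix (Fin d) (Fin d) ℝ) (a b : EuclideanSpace ℝ (Fin d)) :
    mAct A (a + b) = mAct A a + mAct A b := by
  ext i; simp [mAct, Matrix.mulVec_add]

lemma mAct_smul {d : ℕ} (A : Matrix (Fin d) (Fin d) ℝ) (c : ℝ) (a : EuclideanSpace ℝ (Fin d)) :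
    mAct A (c • a) = c • mAct A a := by
  ext i; simp [mAct, Matrix.mulVec, dotProduct, Finset.mul_sum, mul_left_comm]

lemma mAct_mAct {d : ℕ} (A B : Matrix (Fin d) (Fin d) ℝ) (a : EuclideanSpace ℝ (Fin d)) :
    mAct A (mAct B a) = mAct (A * B) a := by
  simp [mAct, Matrix.mulVec_mulVec]

/-- **Lemma 1 of the DSA paper.**  With `U = (Z̃ − Z)^{1/2}` (PSD square root),
the DSA primal-dual update `x⁺ = x − α g − (I − Z̃)x − U v`, `v⁺ = v + U x⁺`,
a primal optimum `x*` with `(I + Z − 2Z̃)x* = 0` and a dual optimum `v*` with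
`α ∇f(x*) + U v* = 0` satisfy
`α (g − ∇f(x*)) = (I + Z − 2Z̃)(x* − x⁺) + Z̃ (x − x⁺) − U (v⁺ − v*)`. -/
theorem dsa_lemma1_primal_dual_identity
    {d : ℕ} (f : EuclideanSpace ℝ (Fin d) → ℝ) (hf : Differentiable ℝ f)
    (α : ℝ) (hα : 0 < α)
    (Z Zt U : Matrix (Fin d) (Fin d) ℝ)
    (hZsym : Z.IsSymm) (hZtsym : Zt.IsSymm)
    (hU : U.PosSemidef) (hU2 : U * U = Zt - Z)
    (x v g xp vp xstar vstar : EuclideanSpace ℝ (Fin d))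
    (hxp : xp = x - α • g - (x - mAct Zt x) - mAct U v)
    (hvp : vp = v + mAct U xp)
    (hxstar : xstar + mAct Z xstar - (2:ℝ) • mAct Zt xstar = 0)
    (hvstar : α • gradient f xstar + mAct U vstar = 0) :
    α • (g - gradient f xstar)
      = ((xstar - xp) + mAct Z (xstar - xp) - (2:ℝ) • mAct Zt (xstar - xp))
        + mAct Zt (x - xp) - mAct U (vp - vstar) := by
  have hUU : ∀ y : EuclideanSpace ℝ (Fin d), mAct U (mAct U y) = mAct Zt y - mAct Z y := by
    intro y
    rw [mAct_mAct, hU2]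
    show WithLp.toLp 2 ((Zt - Z).mulVec y) = _
    rw [Matrix.sub_mulVec]; rfl
  have h1 : mAct U vp = mAct U v + (mAct Zt xp - mAct Z xp) := by
    rw [hvp, mAct_add, hUU]
  have h2 : mAct U vstar = -(α • gradient f xstar) :=
    eq_neg_of_add_eq_zero_right hvstar
  have h3 : mAct Z xstar = (2:ℝ) • mAct Zt xstar - xstar :=
    eq_sub_of_add_eq' (sub_eq_zero.mp hxstar)
  have h4 : xp = mAct Zt x - α • g - mAct U v := by
    rw [hxp]; abel
  simp only [mAct_sub, h1, h2, h3]
  rw [h4]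
  simp only [mAct_sub, mAct_smul]
  module
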